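/- Cauchy determinant formula: for pairwise distinct z₁,…,z_n and pairwise distinct t₁,…,t_n with z_ℓ ≠ t_k for all ℓ,k, the determinant of the matrix (1/(z_ℓ - t_k))_{ℓ,k} equals (∏_{p<q}(z_p - z_q)(t_p - t_q)) / ∏_{ℓ,k}(z_ℓ - t_k), up to sign (−1)^{n(n−1)/2}. In particular this determinant is nonzero. -/

import Mathlib

open Finset Polynomial Matrix

lemma aux_sign {n : ℕ} (f : Fin n → Fin n → ℂ) :
    (∏ i, ∏ j ∈ Ioi i, (f j i)) =
      (-1 : ℂ) ^ (n * (n - 1) / 2) * ∏ i, ∏ j ∈ Ioi i, (-(f j i)) := by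
  have h1 : ∀ i : Fin n, ∏ j ∈ Ioi i, (-(f j i)) =
      (-1 : ℂ) ^ (Ioi i).card * ∏ j ∈ Ioi i, f j i := by
    intro i
    rw [Finset.prod_congr rfl fun j _ => (neg_one_mul (f j i)).symm,
      Finset.prod_mul_distrib, Finset.prod_const]
  have h2 : (∑ i : Fin n, (Ioi i).card) = n * (n - 1) / 2 := by
    simp_rw [Fin.card_Ioi]
    rw [Fin.sum_univ_eq_sum_range]
    rw [Finset.sum_range_reflect (fun j => j) n]
    exact Finset.sum_range_id n
  rw [Finset.prod_congr rfl fun i _ => h1 i, Finset.prod_mul_distrib,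
    Finset.prod_pow_eq_pow_sum, h2]
  have h3 : ((-1 : ℂ) ^ (n * (n - 1) / 2)) * ((-1 : ℂ) ^ (n * (n - 1) / 2)) = 1 := by
    rw [← pow_add, Even.neg_one_pow ⟨_, rfl⟩]
  rw [← mul_assoc, h3, one_mul]



/-- Cauchy determinant formula: for pairwise distinct `z₁,…,z_n`, pairwise
distinct `t₁,…,t_n` with `z_ℓ ≠ t_k`, the determinant of the Cauchy matrix
`(1/(z_ℓ - t_k))` equals
`(-1)^{n(n-1)/2} ∏_{p<q} (z_p - z_q)(t_p - t_q) / ∏_{ℓ,k} (z_ℓ - t_k)`,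
and in particular is nonzero. -/
theorem stmt14 {n : ℕ} (z t : Fin n → ℂ)
    (hz : Function.Injective z) (ht : Function.Injective t)
    (hzt : ∀ ℓ k, z ℓ ≠ t k) :
    (Matrix.of fun ℓ k => (z ℓ - t k)⁻¹).det
      = (-1 : ℂ) ^ (n * (n - 1) / 2) *
        (∏ p, ∏ q ∈ Finset.Ioi p, (z p - z q) * (t p - t q)) /
        ∏ ℓ, ∏ k, (z ℓ - t k) ∧
    (Matrix.of fun ℓ k => (z ℓ - t k)⁻¹).det ≠ 0 := by
  -- nonvanishing facts
  have hzt' : ∀ ℓ k, z ℓ - t k ≠ 0 := fun ℓ k => sub_ne_zero.mpr (hzt ℓ k)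
  have hP : (∏ ℓ, ∏ k, (z ℓ - t k)) ≠ 0 :=
    Finset.prod_ne_zero_iff.mpr fun ℓ _ =>
      Finset.prod_ne_zero_iff.mpr fun k _ => hzt' ℓ k
  have hZ : (∏ p, ∏ q ∈ Finset.Ioi p, (z p - z q)) ≠ 0 :=
    Finset.prod_ne_zero_iff.mpr fun p _ =>
      Finset.prod_ne_zero_iff.mpr fun q hq =>
        sub_ne_zero.mpr fun h => (Finset.mem_Ioi.mp hq).ne (hz h)
  have hT : (∏ p, ∏ q ∈ Finset.Ioi p, (t p - t q)) ≠ 0 :=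
    Finset.prod_ne_zero_iff.mpr fun p _ =>
      Finset.prod_ne_zero_iff.mpr fun q hq =>
        sub_ne_zero.mpr fun h => (Finset.mem_Ioi.mp hq).ne (ht h)
  suffices hmain : (Matrix.of fun ℓ k => (z ℓ - t k)⁻¹).det
      = (-1 : ℂ) ^ (n * (n - 1) / 2) *
        (∏ p, ∏ q ∈ Finset.Ioi p, (z p - z q) * (t p - t q)) /
        ∏ ℓ, ∏ k, (z ℓ - t k) by
    refine ⟨hmain, hmain ▸ ?_⟩
    apply div_ne_zero _ hP
    apply mul_ne_zero (pow_ne_zero _ (by norm_num))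
    simp_rw [Finset.prod_mul_distrib]
    exact mul_ne_zero hZ hT
  rcases Nat.eq_zero_or_pos n with hn | hn
  · subst hn
    simp
  -- polynomial setup
  set p : ℂ[X] := ∏ j : Fin n, (X - C (t j)) with hp
  set q : Fin n → ℂ[X] := fun k => ∏ j ∈ Finset.univ.erase k, (X - C (t j)) with hq
  have hq_mul : ∀ k, q k * (X - C (t k)) = p := fun k =>
    Finset.prod_erase_mul _ _ (Finset.mem_univ k)
  have hpeval : ∀ x, p.eval x = ∏ j, (x - t j) := by intro x; simp [hp, eval_prod]
  have hqeval : ∀ k x, (q k).eval x = ∏ j ∈ Finset.univ.erase k, (x - t j) := by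
    intro k x; simp [hq, eval_prod]
  have hpz : ∀ ℓ, p.eval (z ℓ) ≠ 0 := fun ℓ => by
    rw [hpeval]
    exact Finset.prod_ne_zero_iff.mpr fun k _ => hzt' ℓ k
  have hqlt : ∀ k, (q k).natDegree < n := by
    intro k
    have : (q k).natDegree = ∑ j ∈ Finset.univ.erase k, ((X : ℂ[X]) - C (t j)).natDegree :=
      Polynomial.natDegree_prod _ _ fun j _ => X_sub_C_ne_zero (t j)
    simp only [natDegree_X_sub_C] at this
    rw [this, Finset.sum_const, Finset.card_erase_of_mem (Finset.mem_univ k)]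
    simp only [Finset.card_univ, Fintype.card_fin, smul_eq_mul, mul_one]
    omega
  set A : Matrix (Fin n) (Fin n) ℂ := Matrix.of fun i k => (q k).coeff i with hA
  have hVA : Matrix.vandermonde z * A = Matrix.of fun ℓ k => (q k).eval (z ℓ) := by
    ext ℓ k
    rw [Matrix.mul_apply, Matrix.of_apply, eval_eq_sum_range' (hqlt k) (z ℓ),
      ← Fin.sum_univ_eq_sum_range (fun i => (q k).coeff i * z ℓ ^ i) n]
    exact Finset.sum_congr rfl fun j _ => by
      simp [Matrix.vandermonde, hA, mul_comm]
  have hVtA : Matrix.vandermonde t * A =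
      Matrix.diagonal (fun k => ∏ j ∈ Finset.univ.erase k, (t k - t j)) := by
    ext m k
    have hev : (Matrix.vandermonde t * A) m k = (q k).eval (t m) := by
      rw [Matrix.mul_apply, eval_eq_sum_range' (hqlt k) (t m),
        ← Fin.sum_univ_eq_sum_range (fun i => (q k).coeff i * t m ^ i) n]
      exact Finset.sum_congr rfl fun j _ => by
        simp [Matrix.vandermonde, hA, mul_comm]
    rw [hev]
    by_cases hmk : m = k
    · subst hmk
      rw [Matrix.diagonal_apply_eq, hqeval]
    · rw [Matrix.diagonal_apply_ne _ hmk, hqeval]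
      exact Finset.prod_eq_zero (Finset.mem_erase.mpr ⟨hmk, Finset.mem_univ m⟩) (sub_self _)
  have hdetVt : (Matrix.vandermonde t).det ≠ 0 :=
    (Matrix.det_vandermonde_ne_zero_iff).mpr ht
  have hdetA : (Matrix.vandermonde t).det * A.det =
      ∏ k, ∏ j ∈ Finset.univ.erase k, (t k - t j) := by
    rw [← Matrix.det_mul, hVtA, Matrix.det_diagonal]
  -- Dt identity
  have hDt : (∏ k, ∏ j ∈ Finset.univ.erase k, (t k - t j)) =
      (∏ i, ∏ j ∈ Ioi i, (t i - t j)) * (Matrix.vandermonde t).det :=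
    calc ∏ k, ∏ j ∈ Finset.univ.erase k, (t k - t j)
        = ∏ i, ∏ j ∈ Ioi i, (t i - t j) * (t j - t i) := by
          rw [Finset.prod_prod_Ioi_mul_eq_prod_prod_off_diag (fun a b => t b - t a)]
          exact Finset.prod_congr rfl fun k _ =>
            Finset.prod_congr (by ext j; simp) fun j _ => rfl
      _ = (∏ i, ∏ j ∈ Ioi i, (t i - t j)) * ∏ i, ∏ j ∈ Ioi i, (t j - t i) := by
          simp_rw [Finset.prod_mul_distrib]
      _ = (∏ i, ∏ j ∈ Ioi i, (t i - t j)) * (Matrix.vandermonde t).det := by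
          rw [Matrix.det_vandermonde]
  have hdetA' : A.det = ∏ i, ∏ j ∈ Ioi i, (t i - t j) := by
    refine mul_left_cancel₀ hdetVt ?_
    rw [hdetA, hDt]; ring
  -- Cauchy = scaled rows of (q k).eval (z ℓ)
  have hC : (Matrix.of fun ℓ k => (z ℓ - t k)⁻¹) =
      Matrix.of fun ℓ k => (p.eval (z ℓ))⁻¹ * (q k).eval (z ℓ) := by
    ext ℓ k
    have h := congrArg (eval (z ℓ)) (hq_mul k)
    simp only [eval_mul, eval_sub, eval_X, eval_C] at h
    rw [Matrix.of_apply, Matrix.of_apply, eq_comm]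
    field_simp [hzt' ℓ k, hpz ℓ]
    linear_combination h
  have hdetC : (Matrix.of fun ℓ k => (z ℓ - t k)⁻¹).det =
      (∏ ℓ, (p.eval (z ℓ))⁻¹) * ((Matrix.vandermonde z).det * A.det) := by
    have h := Matrix.det_mul_column (fun ℓ => (p.eval (z ℓ))⁻¹) (Matrix.vandermonde z * A)
    rw [Matrix.det_mul, hVA] at h
    rw [hC]
    exact h
  -- assemble
  rw [hdetC, hdetA', Matrix.det_vandermonde]
  have hsign := aux_sign (fun a b => z a - z b)
  simp only [neg_sub] at hsign
  rw [hsign]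
  have hPinv : (∏ ℓ, (p.eval (z ℓ))⁻¹) = (∏ ℓ, ∏ k, (z ℓ - t k))⁻¹ := by
    rw [← Finset.prod_inv_distrib]
    exact Finset.prod_congr rfl fun ℓ _ => by rw [hpeval]
  rw [hPinv]
  simp_rw [Finset.prod_mul_distrib]
  field_simp
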